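/- Fix k ≥ 2, n ≥ 1. Define the DFA B on state set {1,…,k} × Z_{n+1} over alphabet {a,b,c} where a and b act on the first coordinate as the k-cycle (1 2 … k) and transposition (1 2) respectively (fixing the second coordinate), and c fixes the first coordinate and adds 1 mod n+1 to the second. The initial state is (k,0) and the final set is F_B = { (k,i) | i ∈ Z_{n+1}, i ≠ n }. Then B is a minimal DFA with exactly n final states. -/

import Mathlib

/-- Transition function of the stabilizer witness automaton B: letters 0 and 1
act on the first coordinate as the k-cycle and the transposition (1 2),
letter 2 adds 1 mod n+1 to the second coordinate. -/
def bDelta (k n : ℕ) (hk : 2 ≤ k) :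
    Fin k × ZMod (n + 1) → Fin 3 → Fin k × ZMod (n + 1) :=
  fun p x =>
    if x = 0 then (finRotate k p.1, p.2)
    else if x = 1 then (Equiv.swap (⟨0, by omega⟩ : Fin k) ⟨1, by omega⟩ p.1, p.2)
    else (p.1, p.2 + 1)

/-- Final states of B: first coordinate k, second coordinate different from n. -/
def finB (k n : ℕ) : Set (Fin k × ZMod (n + 1)) :=
  {p | p.1.val = k - 1 ∧ p.2 ≠ (n : ZMod (n + 1))}

lemma bDelta_zero (k n : ℕ) (hk : 2 ≤ k) (p : Fin k × ZMod (n+1)) :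
    bDelta k n hk p 0 = (finRotate k p.1, p.2) := by
  simp [bDelta]

lemma bDelta_two (k n : ℕ) (hk : 2 ≤ k) (p : Fin k × ZMod (n+1)) :
    bDelta k n hk p 2 = (p.1, p.2 + 1) := by
  simp [bDelta]

lemma foldl_zeros (k n : ℕ) (hk : 2 ≤ k) (t : ℕ) (p : Fin k × ZMod (n+1)) :
    (List.replicate t (0 : Fin 3)).foldl (bDelta k n hk) p
      = ((finRotate k)^[t] p.1, p.2) := by
  induction t generalizing p with
  | zero => simp
  | succ t ih =>
      rw [List.replicate_succ, List.foldl_cons, bDelta_zero, ih,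
        Function.iterate_succ_apply]

lemma foldl_twos (k n : ℕ) (hk : 2 ≤ k) (m : ℕ) (p : Fin k × ZMod (n+1)) :
    (List.replicate m (2 : Fin 3)).foldl (bDelta k n hk) p
      = (p.1, p.2 + m) := by
  induction m generalizing p with
  | zero => simp
  | succ m ih =>
      rw [List.replicate_succ, List.foldl_cons, bDelta_two, ih]
      push_cast
      ring_nf

open Fin.NatCast Fin.CommRing in
lemma iter_rot (m t : ℕ) (x : Fin (m+2)) :
    (finRotate (m+2))^[t] x = x + (t : Fin (m+2)) := by
  induction t with
  | zero => simp
  | succ t ih =>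
      rw [Function.iterate_succ_apply', ih, finRotate_succ_apply]
      push_cast
      ring

open Fin.NatCast Fin.CommRing in
lemma mk_eq_neg_one (m : ℕ) : (⟨m+1, by omega⟩ : Fin (m+2)) = -1 := by
  have h : (⟨m+1, by omega⟩ : Fin (m+2)) + 1 = 0 := by
    apply Fin.ext
    simp [Fin.add_def]
  linear_combination h

open Fin.NatCast Fin.CommRing in
/-- B is a minimal DFA with exactly n final states. -/
theorem stmt_13 (k n : ℕ) (hk : 2 ≤ k) (hn : 1 ≤ n) :
    (∀ p : Fin k × ZMod (n + 1),
        ∃ w : List (Fin 3), w.foldl (bDelta k n hk) (⟨k - 1, by omega⟩, 0) = p) ∧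
      (∀ p q : Fin k × ZMod (n + 1), p ≠ q → ∃ w : List (Fin 3),
        ¬(w.foldl (bDelta k n hk) p ∈ finB k n ↔
          w.foldl (bDelta k n hk) q ∈ finB k n)) ∧
      (finB k n).ncard = n := by
  obtain ⟨m, rfl⟩ : ∃ m, k = m + 2 := ⟨k - 2, by omega⟩
  have hne : (n : ZMod (n+1)) ≠ 0 := by
    rw [Ne, ZMod.natCast_eq_zero_iff]
    intro h
    have := Nat.le_of_dvd (by omega) h
    omega
  refine ⟨?_, ?_, ?_⟩
  · rintro ⟨a, s⟩
    refine ⟨List.replicate ((a - ⟨m+1, by omega⟩ : Fin (m+2))).val 0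
      ++ List.replicate s.val 2, ?_⟩
    rw [List.foldl_append, foldl_zeros, iter_rot, foldl_twos]
    simp [ZMod.natCast_rightInverse s]
  · rintro ⟨x, i⟩ ⟨y, j⟩ hpq
    by_cases hxy : x = y
    · subst hxy
      have hij : i ≠ j := fun h => hpq (by rw [h])
      set t : ℕ := ((-1 - x : Fin (m+2))).val with ht
      set c : ℕ := (((n : ZMod (n+1)) - i)).val with hc
      refine ⟨List.replicate t 0 ++ List.replicate c 2, ?_⟩
      rw [List.foldl_append, foldl_zeros, iter_rot, List.foldl_append,
        foldl_zeros, iter_rot, foldl_twos, foldl_twos]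
      have hx1 : x + (t : Fin (m+2)) = -1 := by
        rw [ht, Fin.cast_val_eq_self]; ring
      have hcv : (c : ZMod (n+1)) = (n : ZMod (n+1)) - i := by
        rw [hc, ZMod.natCast_rightInverse]
      have hv : ((-1 : Fin (m+2))).val = m + 1 := by
        rw [← mk_eq_neg_one]
      simp only [finB, Set.mem_setOf_eq, hx1, hcv, hv]
      intro hiff
      have h1 : i + ((n : ZMod (n+1)) - i) = (n : ZMod (n+1)) := by ring
      have h2 : j + ((n : ZMod (n+1)) - i) ≠ (n : ZMod (n+1)) := by
        intro h
        apply hij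
        have := h1.trans h.symm
        exact add_right_cancel this
      rw [h1] at hiff
      have := hiff.mpr ⟨by omega, h2⟩
      exact this.2 rfl
    · set t : ℕ := ((-1 - x : Fin (m+2))).val with ht
      set c : ℕ := if i = (n : ZMod (n+1)) then 1 else 0 with hc
      refine ⟨List.replicate t 0 ++ List.replicate c 2, ?_⟩
      rw [List.foldl_append, foldl_zeros, iter_rot, List.foldl_append,
        foldl_zeros, iter_rot, foldl_twos, foldl_twos]
      have hx1 : x + (t : Fin (m+2)) = -1 := by
        rw [ht, Fin.cast_val_eq_self]; ring
      have hy1 : y + (t : Fin (m+2)) ≠ -1 := by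
        rw [← hx1]
        intro h
        exact hxy (add_right_cancel h).symm
      have hv : ((-1 : Fin (m+2))).val = m + 1 := by
        rw [← mk_eq_neg_one]
      simp only [finB, Set.mem_setOf_eq, hx1, hv]
      intro hiff
      have hic : i + (c : ZMod (n+1)) ≠ (n : ZMod (n+1)) := by
        by_cases h : i = (n : ZMod (n+1))
        · rw [hc, if_pos h, h]
          have h1 : ((1:ℕ) : ZMod (n+1)) ≠ 0 := by
            rw [Ne, ZMod.natCast_eq_zero_iff]
            intro hd
            have := Nat.le_of_dvd (by omega) hd
            omega
          push_cast at h1 ⊢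
          intro heq
          exact h1 (by linear_combination heq)
        · rw [hc, if_neg h]
          push_cast
          simpa using h
      have := hiff.mp ⟨by omega, hic⟩
      apply hy1
      apply Fin.ext
      rw [this.1, hv]
      omega
  · have himg : finB (m+2) n =
        (fun z : ZMod (n+1) => ((⟨m+1, by omega⟩ : Fin (m+2)), z)) ''
          {z | z ≠ (n : ZMod (n+1))} := by
      ext ⟨x, z⟩
      simp only [finB, Set.mem_setOf_eq, Set.mem_image]
      constructor
      · rintro ⟨h1, h2⟩
        refine ⟨z, h2, ?_⟩
        have hx : (⟨m+1, by omega⟩ : Fin (m+2)) = x := by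
          apply Fin.ext
          simp only [Fin.val_mk, h1]
          omega
        rw [hx]
      · rintro ⟨w, hw, h⟩
        obtain ⟨h1, h2⟩ := Prod.mk.injEq .. ▸ h
        subst h2
        refine ⟨by rw [← h1]; simp, hw⟩
    rw [himg, Set.ncard_image_of_injective _ (fun a b h => (Prod.ext_iff.mp h).2)]
    have : {z : ZMod (n+1) | z ≠ (n : ZMod (n+1))} = ({(n : ZMod (n+1))}ᶜ : Set _) := rfl
    rw [this, Set.ncard_eq_toFinset_card']
    simp [Finset.card_compl, ZMod.card]
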